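/- Let I be a monotone one-in-three SAT instance with m clauses and n variables, let ε ∈ (0,1), and let J be the {0,1}-action linear influence game constructed from I and ε as described. Then J has a pure-strategy Nash equilibrium in which every clause player plays 1 if and only if I has a one-in-three solution. -/

import Mathlib

open Finset

/-- A pure-strategy Nash equilibrium of a `{0,1}`-action linear influence game. -/
def IsPSNE01 {P : Type*} [Fintype P] [DecidableEq P]
    (w : P → P → ℝ) (b : P → ℝ) (x : P → ℝ) : Prop :=
  (∀ p, x p = 0 ∨ x p = 1) ∧
    ∀ p, (2 * x p - 1) * ((∑ q ∈ univ.filter (· ≠ p), w q p * x q) - b p) ≥ 0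

/-- Weights of the `{0,1}`-action LIG built from a monotone one-in-three SAT instance:
weight `-1` between distinct variable players appearing together in some clause, weight `1`
from a variable player to each clause player whose clause contains it, and `0` otherwise. -/
def oitW (n m : ℕ) (V : Fin m → Finset (Fin n)) :
    Fin n ⊕ Fin m → Fin n ⊕ Fin m → ℝ
  | Sum.inl u, Sum.inl v => if u ≠ v ∧ ∃ k, u ∈ V k ∧ v ∈ V k then -1 else 0
  | Sum.inl i, Sum.inr k => if i ∈ V k then 1 else 0
  | _, _ => 0

/-- Thresholds of the `{0,1}`-action LIG built from a monotone one-in-three SAT instance: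
`0` for variable players and `ε` for clause players. -/
def oitB (n m : ℕ) (ε : ℝ) : Fin n ⊕ Fin m → ℝ
  | Sum.inl _ => 0
  | Sum.inr _ => ε

lemma oit_sum_clause (n m : ℕ) (V : Fin m → Finset (Fin n)) (x : Fin n ⊕ Fin m → ℝ)
    (k : Fin m) :
    (∑ q ∈ univ.filter (· ≠ (Sum.inr k : Fin n ⊕ Fin m)),
      oitW n m V q (Sum.inr k) * x q) = ∑ i ∈ V k, x (Sum.inl i) := by
  rw [Finset.sum_filter, Fintype.sum_sum_type]
  simp [oitW, ite_mul, Finset.sum_ite_mem]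

lemma oit_sum_var (n m : ℕ) (V : Fin m → Finset (Fin n)) (x : Fin n ⊕ Fin m → ℝ)
    (v : Fin n) :
    (∑ q ∈ univ.filter (· ≠ (Sum.inl v : Fin n ⊕ Fin m)),
      oitW n m V q (Sum.inl v) * x q)
      = -∑ u ∈ univ.filter (fun u => u ≠ v ∧ ∃ k, u ∈ V k ∧ v ∈ V k), x (Sum.inl u) := by
  rw [Finset.sum_filter, Fintype.sum_sum_type]
  have h2 : (∑ j : Fin m, if (Sum.inr j : Fin n ⊕ Fin m) ≠ Sum.inl v then
      oitW n m V (Sum.inr j) (Sum.inl v) * x (Sum.inr j) else 0) = 0 := by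
    simp [oitW]
  rw [h2, add_zero, Finset.sum_filter, ← Finset.sum_neg_distrib]
  apply Finset.sum_congr rfl
  intro u _
  by_cases h : u = v
  · subst h; simp
  · by_cases h2 : ∃ k, u ∈ V k ∧ v ∈ V k <;> simp [oitW, h, h2]

lemma oit_card_eq_sum (n : ℕ) (s : Finset (Fin n)) (t : Fin n → ℝ)
    (ht01 : ∀ i, t i = 0 ∨ t i = 1) :
    ((s.filter (fun i => t i = 1)).card : ℝ) = ∑ i ∈ s, t i := by
  rw [← Finset.sum_boole]
  apply Finset.sum_congr rfl
  intro i _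
  rcases ht01 i with h | h <;> simp [h]

/-- The LIG built from a monotone one-in-three SAT instance has a PSNE in
which every clause player plays 1 iff the instance has a one-in-three solution (a truth
assignment making exactly one variable true in every clause). -/
theorem oneInThree_lig_psne_iff (n m : ℕ)
    (V : Fin m → Finset (Fin n)) (hV : ∀ k, (V k).card = 3)
    (ε : ℝ) (hε0 : 0 < ε) (hε1 : ε < 1) :
    (∃ x : Fin n ⊕ Fin m → ℝ,
        IsPSNE01 (oitW n m V) (oitB n m ε) x ∧ ∀ k : Fin m, x (Sum.inr k) = 1)
      ↔
    (∃ t : Fin n → ℝ, (∀ i, t i = 0 ∨ t i = 1) ∧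
        ∀ k : Fin m, ((V k).filter (fun i => t i = 1)).card = 1) := by
  constructor
  · rintro ⟨x, ⟨hx01, hx⟩, hcl⟩
    have htnn : ∀ i, 0 ≤ x (Sum.inl i) := by
      intro i; rcases hx01 (Sum.inl i) with h | h <;> rw [h] <;> norm_num
    refine ⟨fun i => x (Sum.inl i), fun i => hx01 (Sum.inl i), fun k => ?_⟩
    simp only []
    have h1 := hx (Sum.inr k)
    rw [oit_sum_clause, hcl k] at h1
    simp only [oitB] at h1
    have hsum : ε ≤ ∑ i ∈ V k, x (Sum.inl i) := by nlinarith
    have hcard := oit_card_eq_sum n (V k) (fun i => x (Sum.inl i))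
      (fun i => hx01 (Sum.inl i))
    have hpos : 1 ≤ ((V k).filter (fun i => x (Sum.inl i) = 1)).card := by
      by_contra h
      push_neg at h
      have h0 : ((V k).filter (fun i => x (Sum.inl i) = 1)).card = 0 := by omega
      rw [h0] at hcard
      simp only [Nat.cast_zero] at hcard
      linarith
    have hle : ((V k).filter (fun i => x (Sum.inl i) = 1)).card ≤ 1 := by
      rw [Finset.card_le_one]
      intro a ha b hb
      by_contra hab
      simp only [Finset.mem_filter] at ha hb
      have h2 := hx (Sum.inl b)
      rw [oit_sum_var] at h2
      simp only [oitB] at h2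
      rw [hb.2] at h2
      have hT : (∑ u ∈ univ.filter (fun u => u ≠ b ∧ ∃ k, u ∈ V k ∧ b ∈ V k),
          x (Sum.inl u)) ≤ 0 := by nlinarith
      have hamem : a ∈ univ.filter (fun u => u ≠ b ∧ ∃ k, u ∈ V k ∧ b ∈ V k) := by
        simp only [Finset.mem_filter, Finset.mem_univ, true_and]
        exact ⟨hab, k, ha.1, hb.1⟩
      have hs := Finset.single_le_sum (f := fun u => x (Sum.inl u))
        (fun u _ => htnn u) hamem
      rw [ha.2] at hs
      linarith
    omega
  · rintro ⟨t, ht01, hcard⟩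
    have htnn : ∀ i, 0 ≤ t i := by
      intro i; rcases ht01 i with h | h <;> rw [h] <;> norm_num
    refine ⟨Sum.elim t (fun _ => 1), ⟨?_, ?_⟩, fun k => rfl⟩
    · rintro (i | k)
      · exact ht01 i
      · right; rfl
    · rintro (v | k)
      · rw [oit_sum_var]
        simp only [oitB, Sum.elim_inl, sub_zero]
        rcases ht01 v with h | h
        · rw [h]
          have hT : 0 ≤ ∑ u ∈ univ.filter (fun u => u ≠ v ∧ ∃ k, u ∈ V k ∧ v ∈ V k),
              t u := Finset.sum_nonneg (fun u _ => htnn u)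
          nlinarith
        · rw [h]
          have hT : (∑ u ∈ univ.filter (fun u => u ≠ v ∧ ∃ k, u ∈ V k ∧ v ∈ V k),
              t u) = 0 := by
            apply Finset.sum_eq_zero
            intro u hu
            simp only [Finset.mem_filter, Finset.mem_univ, true_and] at hu
            obtain ⟨huv, k, huk, hvk⟩ := hu
            by_contra htu
            have hu1 : t u = 1 := (ht01 u).resolve_left htu
            have h1 := hcard k
            rw [Finset.card_eq_one] at h1
            obtain ⟨a, ha⟩ := h1
            have hva : v = a := by
              have : v ∈ (V k).filter (fun i => t i = 1) := by
                simp [hvk, h]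
              rwa [ha, Finset.mem_singleton] at this
            have hua : u = a := by
              have : u ∈ (V k).filter (fun i => t i = 1) := by
                simp [huk, hu1]
              rwa [ha, Finset.mem_singleton] at this
            exact huv (hua.trans hva.symm)
          rw [hT]
          norm_num
      · rw [oit_sum_clause]
        simp only [oitB, Sum.elim_inr, Sum.elim_inl]
        have := oit_card_eq_sum n (V k) t ht01
        rw [hcard k] at this
        push_cast at this
        rw [← this]
        nlinarith
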